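/- Let f : [0,1] → ℝ be a density with f(v) ≥ f_lower > 0, and suppose F(1−ε/2) < ε²/2 for some ε ∈ (0, 1/8] where F is the CDF of f, and f is constant on [1−ε/2, 1). Then in any pair (w₁, w₂) with w₁ = 0 and equal profits ∫_0^{w₂} v f(v)dv = ∫_{w₂}^1 (v−w₂) f(v)dv, it must be that w₂ > 1−ε. -/

import Mathlib

open MeasureTheory Set intervalIntegral

/-- If the density `f` concentrates mass near 1 (`F(1−ε/2) < ε²/2` for some `ε ∈ (0,1/8]`)
and is constant on `[1−ε/2, 1)`, then in any equal-profit pair with the low firm paying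
wage 0, the high firm's wage `w₂` must exceed `1 − ε`. -/
theorem stmt19 (flower fupper ε : ℝ) (hfl : 0 < flower)
    (hε : ε ∈ Set.Ioc (0:ℝ) (1/8))
    (f : ℝ → ℝ) (hm : Measurable f)
    (hlb : ∀ v ∈ Set.Icc (0:ℝ) 1, flower ≤ f v)
    (hub : ∀ v ∈ Set.Icc (0:ℝ) 1, f v ≤ fupper)
    (hdens : (∫ v in (0:ℝ)..1, f v) = 1)
    (hmass : (∫ v in (0:ℝ)..(1 - ε/2), f v) < ε ^ 2 / 2)
    (hconst : ∀ x ∈ Set.Ico (1 - ε/2) 1, ∀ y ∈ Set.Ico (1 - ε/2) 1, f x = f y)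
    (w₂ : ℝ) (hw₂ : w₂ ∈ Set.Icc (0:ℝ) 1)
    (heq : (∫ v in (0:ℝ)..w₂, v * f v) = ∫ v in w₂..1, (v - w₂) * f v) :
    1 - ε < w₂ := by
  obtain ⟨hε0, hε8⟩ := hε
  by_contra hcon
  push_neg at hcon
  have hfnn : ∀ v ∈ Set.Icc (0:ℝ) 1, 0 ≤ f v := fun v hv => le_trans hfl.le (hlb v hv)
  have h0m : (0:ℝ) ∈ Set.Icc (0:ℝ) 1 := by constructor <;> norm_num
  have hfup : 0 < fupper := lt_of_lt_of_le hfl (le_trans (hlb 0 h0m) (hub 0 h0m))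
  -- integrability machinery
  have hIcc : ∀ g : ℝ → ℝ, Measurable g → (∀ v ∈ Set.Icc (0:ℝ) 1, |g v| ≤ fupper) →
      IntegrableOn g (Set.Icc (0:ℝ) 1) := by
    intro g hg hb
    apply Integrable.mono' (integrable_const fupper) hg.aestronglyMeasurable
    exact (ae_restrict_iff' measurableSet_Icc).2 (ae_of_all _ hb)
  have hii : ∀ g : ℝ → ℝ, IntegrableOn g (Set.Icc (0:ℝ) 1) →
      ∀ a b : ℝ, a ∈ Set.Icc (0:ℝ) 1 → b ∈ Set.Icc (0:ℝ) 1 →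
      IntervalIntegrable g MeasureTheory.volume a b := by
    intro g hg a b ha hb
    rw [intervalIntegrable_iff]
    apply hg.mono_set
    intro x hx
    rw [Set.mem_uIoc] at hx
    constructor <;> rcases hx with ⟨h1, h2⟩ | ⟨h1, h2⟩ <;>
      [linarith [ha.1]; linarith [hb.1]; linarith [hb.2]; linarith [ha.2]]
  have hIf : IntegrableOn f (Set.Icc (0:ℝ) 1) := by
    apply hIcc f hm
    intro v hv
    rw [abs_le]
    exact ⟨by linarith [hfnn v hv, hfup], hub v hv⟩
  have hIvf : IntegrableOn (fun v => v * f v) (Set.Icc (0:ℝ) 1) := by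
    apply hIcc (fun v => v * f v) (measurable_id.mul hm)
    intro v hv
    rw [abs_mul]
    calc |v| * |f v| ≤ 1 * fupper := by
          apply mul_le_mul _ _ (abs_nonneg _) zero_le_one
          · rw [abs_le]; exact ⟨by linarith [hv.1], hv.2⟩
          · rw [abs_le]; exact ⟨by linarith [hfnn v hv, hfup], hub v hv⟩
      _ = fupper := one_mul _
  have hIwf : IntegrableOn (fun v => (v - w₂) * f v) (Set.Icc (0:ℝ) 1) := by
    apply hIcc (fun v => (v - w₂) * f v) ((measurable_id.sub measurable_const).mul hm)
    intro v hv
    rw [abs_mul]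
    calc |v - w₂| * |f v| ≤ 1 * fupper := by
          apply mul_le_mul _ _ (abs_nonneg _) zero_le_one
          · rw [abs_le]
            exact ⟨by linarith [hv.1, hw₂.2], by linarith [hv.2, hw₂.1]⟩
          · rw [abs_le]; exact ⟨by linarith [hfnn v hv, hfup], hub v hv⟩
      _ = fupper := one_mul _
  have h1m : (1:ℝ) ∈ Set.Icc (0:ℝ) 1 := by constructor <;> norm_num
  have hεm : (1 - ε/2) ∈ Set.Icc (0:ℝ) 1 := by constructor <;> linarith
  -- Step 1: left profit < ε²/2
  have h1 : (∫ v in (0:ℝ)..w₂, v * f v) ≤ ∫ v in (0:ℝ)..w₂, f v := by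
    apply intervalIntegral.integral_mono_on hw₂.1
      (hii _ hIvf _ _ h0m hw₂) (hii _ hIf _ _ h0m hw₂)
    intro x hx
    have hx1 : x ∈ Set.Icc (0:ℝ) 1 := ⟨hx.1, le_trans hx.2 hw₂.2⟩
    nlinarith [hfnn x hx1, hx1.2]
  have h2 : (∫ v in (0:ℝ)..w₂, f v) ≤ ∫ v in (0:ℝ)..(1 - ε/2), f v := by
    have hsplit : (∫ v in (0:ℝ)..w₂, f v) + (∫ v in w₂..(1 - ε/2), f v)
        = ∫ v in (0:ℝ)..(1 - ε/2), f v :=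
      intervalIntegral.integral_add_adjacent_intervals
        (hii _ hIf _ _ h0m hw₂) (hii _ hIf _ _ hw₂ hεm)
    have hnn : 0 ≤ ∫ v in w₂..(1 - ε/2), f v := by
      apply intervalIntegral.integral_nonneg (by linarith)
      intro u hu
      exact hfnn u ⟨le_trans hw₂.1 hu.1, by linarith [hu.2]⟩
    linarith
  have hL : (∫ v in (0:ℝ)..w₂, v * f v) < ε ^ 2 / 2 := by linarith
  -- Step 2: right profit ≥ (ε/2)(1 - ∫_0^{1-ε/2} f)
  have hsplitR : (∫ v in w₂..(1 - ε/2), (v - w₂) * f v)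
      + (∫ v in (1 - ε/2)..1, (v - w₂) * f v) = ∫ v in w₂..1, (v - w₂) * f v :=
    intervalIntegral.integral_add_adjacent_intervals
      (hii _ hIwf _ _ hw₂ hεm) (hii _ hIwf _ _ hεm h1m)
  have hnn1 : 0 ≤ ∫ v in w₂..(1 - ε/2), (v - w₂) * f v := by
    apply intervalIntegral.integral_nonneg (by linarith)
    intro u hu
    have hu1 : u ∈ Set.Icc (0:ℝ) 1 := ⟨le_trans hw₂.1 hu.1, by linarith [hu.2]⟩
    exact mul_nonneg (by linarith [hu.1]) (hfnn u hu1)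
  have h4 : (∫ v in (1 - ε/2)..1, (ε/2) * f v) ≤ ∫ v in (1 - ε/2)..1, (v - w₂) * f v := by
    apply intervalIntegral.integral_mono_on (by linarith)
      ((hii _ hIf _ _ hεm h1m).const_mul _) (hii _ hIwf _ _ hεm h1m)
    intro x hx
    have hx1 : x ∈ Set.Icc (0:ℝ) 1 := ⟨by linarith [hx.1], hx.2⟩
    have : ε/2 ≤ x - w₂ := by linarith [hx.1]
    nlinarith [hfnn x hx1]
  have h5 : (∫ v in (1 - ε/2)..1, (ε/2) * f v)
      = (ε/2) * (1 - ∫ v in (0:ℝ)..(1 - ε/2), f v) := by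
    rw [intervalIntegral.integral_const_mul]
    have hsplit : (∫ v in (0:ℝ)..(1 - ε/2), f v) + (∫ v in (1 - ε/2)..1, f v)
        = ∫ v in (0:ℝ)..1, f v :=
      intervalIntegral.integral_add_adjacent_intervals
        (hii _ hIf _ _ h0m hεm) (hii _ hIf _ _ hεm h1m)
    rw [hdens] at hsplit
    rw [show (∫ v in (1 - ε/2)..1, f v) = 1 - ∫ v in (0:ℝ)..(1 - ε/2), f v by linarith]
  -- combine
  have hR : (ε/2) * (1 - ε ^ 2 / 2) ≤ ∫ v in w₂..1, (v - w₂) * f v := by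
    have : (ε/2) * (1 - ε ^ 2 / 2) ≤ (ε/2) * (1 - ∫ v in (0:ℝ)..(1 - ε/2), f v) := by
      apply mul_le_mul_of_nonneg_left (by linarith) (by linarith)
    linarith [h4, h5, hnn1, hsplitR]
  rw [heq] at hL
  nlinarith
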